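/- For each 0 < ε < 1/2 and each positive integer k, any graph G = (V, E) on at least k vertices contains an ε-regular k-cylinder V_1 × ... × V_k with parts of equal size, where the size of each part is at least (1/(2k))·ε^{k^2·ε^{−5}}·|V|. -/

import Mathlib

/-- The density of the pair of vertex sets `(A, B)` in the graph `G`:
`d(A,B) = e(A,B) / (|A| |B|)`. -/
noncomputable def density {V : Type*} (G : SimpleGraph V) (A B : Finset V) : ℝ :=
  ({p : V × V | p.1 ∈ A ∧ p.2 ∈ B ∧ G.Adj p.1 p.2}.ncard : ℝ) / ((A.card : ℝ) * (B.card : ℝ))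

/-- The pair `(A, B)` is `ε`-regular in `G`: for all `X ⊆ A`, `Y ⊆ B` with
`|X| > ε|A|` and `|Y| > ε|B|`, one has `|d(X,Y) - d(A,B)| < ε`. -/
def EpsRegular {V : Type*} (G : SimpleGraph V) (ε : ℝ) (A B : Finset V) : Prop :=
  ∀ X ⊆ A, ∀ Y ⊆ B, ε * (A.card : ℝ) < (X.card : ℝ) → ε * (B.card : ℝ) < (Y.card : ℝ) →
    |density G X Y - density G A B| < ε

/-- The number of neighbors of the vertex `a` inside the set `B`. -/
noncomputable def degIn {V : Type*} (G : SimpleGraph V) (a : V) (B : Finset V) : ℕ :=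
  {b : V | b ∈ B ∧ G.Adj a b}.ncard

/-- The pair `(A, B)` is `(ε, d, δ)`-super-regular in `G`: it is `ε`-regular, has
density at least `d`, every vertex of `A` has at least `δ|B|` neighbors in `B`, and
every vertex of `B` has at least `δ|A|` neighbors in `A`. -/
def SuperRegular {V : Type*} (G : SimpleGraph V) (ε d δ : ℝ) (A B : Finset V) : Prop :=
  EpsRegular G ε A B ∧ d ≤ density G A B ∧
    (∀ a ∈ A, δ * (B.card : ℝ) ≤ (degIn G a B : ℝ)) ∧
    (∀ b ∈ B, δ * (A.card : ℝ) ≤ (degIn G b A : ℝ))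

set_option maxHeartbeats 1000000
set_option linter.unusedSectionVars false

open scoped Classical

namespace Weak

variable {V : Type*} [DecidableEq V]

noncomputable def nE (G : SimpleGraph V) (A B : Finset V) : ℕ :=
  ∑ a ∈ A, (B.filter (fun b => G.Adj a b)).card

lemma nE_eq (G : SimpleGraph V) (A B : Finset V) :
    nE G A B = ((A ×ˢ B).filter (fun p => G.Adj p.1 p.2)).card := by
  rw [Finset.card_filter, Finset.sum_product, nE]
  refine Finset.sum_congr rfl fun a _ => ?_
  rw [Finset.card_filter]

lemma density_eq (G : SimpleGraph V) (A B : Finset V) :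
    density G A B = (nE G A B : ℝ) / ((A.card : ℝ) * (B.card : ℝ)) := by
  have h : {p : V × V | p.1 ∈ A ∧ p.2 ∈ B ∧ G.Adj p.1 p.2}
      = ↑((A ×ˢ B).filter (fun p => G.Adj p.1 p.2)) := by
    ext p
    simp [Finset.mem_filter, Finset.mem_product, and_assoc]
  rw [density, h, Set.ncard_coe_finset, nE_eq]

lemma nE_comm (G : SimpleGraph V) (A B : Finset V) : nE G A B = nE G B A := by
  rw [nE, nE]
  simp only [Finset.card_filter]
  rw [Finset.sum_comm]
  refine Finset.sum_congr rfl fun a _ => Finset.sum_congr rfl fun b _ => ?_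
  simp [G.adj_comm]

lemma density_comm (G : SimpleGraph V) (A B : Finset V) : density G A B = density G B A := by
  rw [density_eq, density_eq, nE_comm, mul_comm]

lemma nE_le (G : SimpleGraph V) (A B : Finset V) : nE G A B ≤ A.card * B.card := by
  calc nE G A B ≤ ∑ _a ∈ A, B.card :=
        Finset.sum_le_sum fun a _ => Finset.card_filter_le _ _
    _ = A.card * B.card := by rw [Finset.sum_const, smul_eq_mul]

lemma density_nonneg (G : SimpleGraph V) (A B : Finset V) : 0 ≤ density G A B := by
  rw [density_eq]; positivity

lemma density_le_one (G : SimpleGraph V) (A B : Finset V) : density G A B ≤ 1 := by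
  rw [density_eq]
  apply div_le_one_of_le₀
  · exact_mod_cast Nat.cast_le.mpr (nE_le G A B) |>.trans (by push_cast; ring_nf; exact le_refl _)
  · positivity

lemma nE_biUnion_left (G : SimpleGraph V) {ι : Type*} [DecidableEq ι] (I : Finset ι)
    (f : ι → Finset V) (B : Finset V) (h : (↑I : Set ι).PairwiseDisjoint f) :
    nE G (I.biUnion f) B = ∑ x ∈ I, nE G (f x) B := by
  rw [nE, Finset.sum_biUnion h]; rfl

lemma nE_biUnion_right (G : SimpleGraph V) {ι : Type*} [DecidableEq ι] (I : Finset ι)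
    (f : ι → Finset V) (A : Finset V) (h : (↑I : Set ι).PairwiseDisjoint f) :
    nE G A (I.biUnion f) = ∑ x ∈ I, nE G A (f x) := by
  rw [nE_comm, nE_biUnion_left G I f A h]
  exact Finset.sum_congr rfl fun x _ => nE_comm G (f x) A

-- chunk B

variable {V : Type*} [DecidableEq V]

/-- There is a `z`-subset whose `w`-average is at least that of `X`. -/
lemma exists_subset_avg_ge (w : V → ℝ) (X : Finset V) (z : ℕ) (hz1 : 1 ≤ z)
    (hz : z ≤ X.card) :
    ∃ S ⊆ X, S.card = z ∧ (∑ a ∈ X, w a) * z ≤ (∑ a ∈ S, w a) * X.card := by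
  obtain ⟨d, hd⟩ : ∃ d, X.card = z + d := ⟨X.card - z, by omega⟩
  clear hz
  induction d generalizing X with
  | zero =>
      exact ⟨X, Finset.Subset.refl X, by omega, by rw [hd]; push_cast; ring_nf; exact le_refl _⟩
  | succ d ih =>
      have hne : X.Nonempty := Finset.card_pos.mp (by omega)
      obtain ⟨v, hv, hmin⟩ := Finset.exists_min_image X w hne
      set X' := X.erase v with hX'
      have hcard' : X'.card = z + d := by
        rw [hX', Finset.card_erase_of_mem hv]; omega
      obtain ⟨S, hS, hScard, hSavg⟩ := ih X' hcard'
      refine ⟨S, hS.trans (Finset.erase_subset _ _), hScard, ?_⟩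
      have hsplit : ∑ a ∈ X, w a = w v + ∑ a ∈ X', w a := (Finset.add_sum_erase X w hv).symm
      have hmin' : (X.card : ℝ) * w v ≤ ∑ a ∈ X, w a := by
        have := Finset.card_nsmul_le_sum X w (w v) (fun x hx => hmin x hx)
        simpa [nsmul_eq_mul] using this
      -- key: (∑ X) * (X.card - 1) ≤ (∑ X') * X.card
      have hkey : (∑ a ∈ X, w a) * ((X.card : ℝ) - 1) ≤ (∑ a ∈ X', w a) * X.card := by
        have : (∑ a ∈ X', w a) = (∑ a ∈ X, w a) - w v := by rw [hsplit]; ring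
        rw [this]; nlinarith [hmin']
      have hc' : (X'.card : ℝ) = (X.card : ℝ) - 1 := by
        rw [hcard']; rw [hd]; push_cast; ring
      have hXpos : (0:ℝ) < (X.card : ℝ) - 1 := by
        rw [hd]; push_cast; have : (1:ℝ) ≤ z := by exact_mod_cast hz1
        linarith
      -- combine
      have h1 : (∑ a ∈ X, w a) * z * ((X.card:ℝ) - 1) ≤ (∑ a ∈ S, w a) * X.card * ((X.card:ℝ)-1) := by
        calc (∑ a ∈ X, w a) * z * ((X.card:ℝ) - 1)
            = ((∑ a ∈ X, w a) * ((X.card:ℝ) - 1)) * z := by ring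
          _ ≤ ((∑ a ∈ X', w a) * (X.card:ℝ)) * z := by
              apply mul_le_mul_of_nonneg_right hkey; positivity
          _ = ((∑ a ∈ X', w a) * z) * (X.card:ℝ) := by ring
          _ ≤ ((∑ a ∈ S, w a) * X'.card) * (X.card:ℝ) := by
              apply mul_le_mul_of_nonneg_right hSavg; positivity
          _ = (∑ a ∈ S, w a) * X.card * ((X.card:ℝ)-1) := by rw [hc']; ring
      exact le_of_mul_le_mul_right h1 hXpos

/-- There is a `z`-subset whose `w`-average is at most that of `X`. -/
lemma exists_subset_avg_le (w : V → ℝ) (X : Finset V) (z : ℕ) (hz1 : 1 ≤ z)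
    (hz : z ≤ X.card) :
    ∃ S ⊆ X, S.card = z ∧ (∑ a ∈ S, w a) * X.card ≤ (∑ a ∈ X, w a) * z := by
  obtain ⟨S, hS, hcard, h⟩ := exists_subset_avg_ge (fun a => -(w a)) X z hz1 hz
  refine ⟨S, hS, hcard, ?_⟩
  simp only [Finset.sum_neg_distrib] at h
  nlinarith [h]


-- chunk C

/-- A subset of prescribed size with at least the original density. -/
lemma exists_subset_density_ge (G : SimpleGraph V) (X Y : Finset V) (z : ℕ)
    (hz1 : 1 ≤ z) (hz : z ≤ X.card) :
    ∃ S ⊆ X, S.card = z ∧ density G X Y ≤ density G S Y := by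
  obtain ⟨S, hS, hcard, havg⟩ :=
    exists_subset_avg_ge (fun a => ((Y.filter (fun b => G.Adj a b)).card : ℝ)) X z hz1 hz
  refine ⟨S, hS, hcard, ?_⟩
  have hnE : ∀ T : Finset V, (nE G T Y : ℝ)
      = ∑ a ∈ T, ((Y.filter (fun b => G.Adj a b)).card : ℝ) := by
    intro T; rw [nE]; push_cast; rfl
  rw [density_eq, density_eq, hcard, hnE, hnE]
  have hzpos : (0:ℝ) < z := by exact_mod_cast hz1
  have hXpos : (0:ℝ) < X.card := by
    have : (0:ℕ) < X.card := lt_of_lt_of_le hz1 hz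
    exact_mod_cast this
  rcases Nat.eq_zero_or_pos Y.card with hY | hY
  · simp [hY]
  have hYpos : (0:ℝ) < Y.card := by exact_mod_cast hY
  rw [div_le_div_iff₀ (by positivity) (by positivity)]
  nlinarith [havg, hYpos.le]

/-- A subset of prescribed size with at most the original density. -/
lemma exists_subset_density_le (G : SimpleGraph V) (X Y : Finset V) (z : ℕ)
    (hz1 : 1 ≤ z) (hz : z ≤ X.card) :
    ∃ S ⊆ X, S.card = z ∧ density G S Y ≤ density G X Y := by
  obtain ⟨S, hS, hcard, havg⟩ :=
    exists_subset_avg_le (fun a => ((Y.filter (fun b => G.Adj a b)).card : ℝ)) X z hz1 hz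
  refine ⟨S, hS, hcard, ?_⟩
  have hnE : ∀ T : Finset V, (nE G T Y : ℝ)
      = ∑ a ∈ T, ((Y.filter (fun b => G.Adj a b)).card : ℝ) := by
    intro T; rw [nE]; push_cast; rfl
  rw [density_eq, density_eq, hcard, hnE, hnE]
  have hzpos : (0:ℝ) < z := by exact_mod_cast hz1
  have hXpos : (0:ℝ) < X.card := by
    have : (0:ℕ) < X.card := lt_of_lt_of_le hz1 hz
    exact_mod_cast this
  rcases Nat.eq_zero_or_pos Y.card with hY | hY
  · simp [hY]
  have hYpos : (0:ℝ) < Y.card := by exact_mod_cast hY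
  rw [div_le_div_iff₀ (by positivity) (by positivity)]
  nlinarith [havg, hYpos.le]

/-- Partition of a finset of size `m*u` into `m` blocks of size `u`. -/
lemma exists_blocks (u : ℕ) (hu : 0 < u) :
    ∀ (m : ℕ) (C : Finset V), C.card = m * u →
    ∃ P : Finset (Finset V), P.card = m ∧ (∀ b ∈ P, b ⊆ C ∧ b.card = u) ∧
      (↑P : Set (Finset V)).PairwiseDisjoint id ∧ P.biUnion id = C := by
  intro m
  induction m with
  | zero =>
      intro C hC
      have : C = ∅ := Finset.card_eq_zero.mp (by simpa using hC)
      exact ⟨∅, by simp, by simp, by simp, by simp [this]⟩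
  | succ m ih =>
      intro C hC
      obtain ⟨S, hSsub, hScard⟩ := Finset.exists_subset_card_eq
        (show u ≤ C.card by rw [hC]; nlinarith)
      have hC' : (C \ S).card = m * u := by
        rw [Finset.card_sdiff_of_subset hSsub, hC, hScard, Nat.succ_mul]; omega
      obtain ⟨P, hPcard, hPmem, hPdisj, hPun⟩ := ih (C \ S) hC'
      have hSne : S.Nonempty := Finset.card_pos.mp (by omega)
      have hSnotin : S ∉ P := by
        intro hmem
        obtain ⟨x, hx⟩ := hSne
        have := (hPmem S hmem).1 hx
        rw [Finset.mem_sdiff] at this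
        exact this.2 hx
      refine ⟨insert S P, ?_, ?_, ?_, ?_⟩
      · rw [Finset.card_insert_of_notMem hSnotin, hPcard]
      · intro b hb
        rcases Finset.mem_insert.mp hb with h | h
        · subst h; exact ⟨hSsub, hScard⟩
        · exact ⟨(hPmem b h).1.trans Finset.sdiff_subset, (hPmem b h).2⟩
      · intro b hb c hc hbc
        simp only [Finset.coe_insert, Set.mem_insert_iff, Finset.mem_coe] at hb hc
        have hdS : ∀ d ∈ P, Disjoint S d := by
          intro d hd
          exact Finset.disjoint_sdiff.mono_right (hPmem d hd).1
        rcases hb with rfl | hb <;> rcases hc with rfl | hc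
        · exact absurd rfl hbc
        · exact hdS c hc
        · exact (hdS b hb).symm
        · exact hPdisj hb hc hbc
      · rw [Finset.biUnion_insert, hPun]
        simpa using Finset.union_sdiff_of_subset hSsub

/-- Blocks of `A` refining a given subset `X₀` of size `a*u`. -/
lemma exists_blocks_split (u : ℕ) (hu : 0 < u) (a D : ℕ) (A X₀ : Finset V) (hsub : X₀ ⊆ A)
    (hA : A.card = D * u) (hX : X₀.card = a * u) (haD : a ≤ D) :
    ∃ P P₁ : Finset (Finset V), P₁ ⊆ P ∧ P.card = D ∧ P₁.card = a ∧
      (∀ b ∈ P, b ⊆ A ∧ b.card = u) ∧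
      (↑P : Set (Finset V)).PairwiseDisjoint id ∧ P.biUnion id = A ∧
      P₁.biUnion id = X₀ := by
  obtain ⟨P₁, hP₁card, hP₁mem, hP₁disj, hP₁un⟩ := exists_blocks u hu a X₀ hX
  have hAX : (A \ X₀).card = (D - a) * u := by
    rw [Finset.card_sdiff_of_subset hsub, hA, hX, Nat.sub_mul]
  obtain ⟨P₂, hP₂card, hP₂mem, hP₂disj, hP₂un⟩ := exists_blocks u hu (D - a) (A \ X₀) hAX
  have hdisjP : Disjoint P₁ P₂ := by
    rw [Finset.disjoint_left]
    intro b hb1 hb2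
    have hbne : b.Nonempty := Finset.card_pos.mp (by rw [(hP₁mem b hb1).2]; omega)
    obtain ⟨x, hx⟩ := hbne
    have h1 := (hP₁mem b hb1).1 hx
    have h2 := (hP₂mem b hb2).1 hx
    rw [Finset.mem_sdiff] at h2
    exact h2.2 h1
  have hblockdisj : ∀ b ∈ P₁, ∀ c ∈ P₂, Disjoint b c := by
    intro b hb c hc
    exact (Finset.disjoint_sdiff.mono_right (hP₂mem c hc).1).mono_left (hP₁mem b hb).1
  refine ⟨P₁ ∪ P₂, P₁, Finset.subset_union_left, ?_, hP₁card, ?_, ?_, ?_, hP₁un⟩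
  · rw [Finset.card_union_of_disjoint hdisjP, hP₁card, hP₂card]; omega
  · intro b hb
    rcases Finset.mem_union.mp hb with h | h
    · exact ⟨(hP₁mem b h).1.trans hsub, (hP₁mem b h).2⟩
    · exact ⟨(hP₂mem b h).1.trans Finset.sdiff_subset, (hP₂mem b h).2⟩
  · intro b hb c hc hbc
    simp only [Finset.coe_union, Set.mem_union, Finset.mem_coe] at hb hc
    rcases hb with hb | hb <;> rcases hc with hc | hc
    · exact hP₁disj hb hc hbc
    · exact hblockdisj b hb c hc
    · exact (hblockdisj c hc b hb).symm
    · exact hP₂disj hb hc hbc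
  · have hsplitU : (P₁ ∪ P₂).biUnion id = P₁.biUnion id ∪ P₂.biUnion id := by
      ext x
      simp only [Finset.mem_biUnion, Finset.mem_union]
      constructor
      · rintro ⟨b, hb | hb, hx⟩
        exacts [Or.inl ⟨b, hb, hx⟩, Or.inr ⟨b, hb, hx⟩]
      · rintro (⟨b, hb, hx⟩ | ⟨b, hb, hx⟩)
        exacts [⟨b, Or.inl hb, hx⟩, ⟨b, Or.inr hb, hx⟩]
    rw [hsplitU, hP₁un, hP₂un]
    simpa using Finset.union_sdiff_of_subset hsub


-- chunk D : sums over blocks, Jensen/defect, pair gain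

lemma card_biUnion_blocks (u : ℕ) (P : Finset (Finset V))
    (hP : ∀ b ∈ P, b.card = u) (hPd : (↑P : Set (Finset V)).PairwiseDisjoint id) :
    (P.biUnion id).card = P.card * u := by
  rw [Finset.card_biUnion (fun x hx y hy hxy => hPd hx hy hxy)]
  calc ∑ b ∈ P, (id b).card = ∑ _b ∈ P, u := Finset.sum_congr rfl (fun b hb => hP b hb)
    _ = P.card * u := by rw [Finset.sum_const, smul_eq_mul]

lemma sum_density_blocks (G : SimpleGraph V) (u : ℕ) (hu : 0 < u)
    (P₁ Q₁ : Finset (Finset V)) (X₀ Y₀ : Finset V)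
    (hP : ∀ b ∈ P₁, b.card = u) (hPd : (↑P₁ : Set (Finset V)).PairwiseDisjoint id)
    (hPu : P₁.biUnion id = X₀)
    (hQ : ∀ c ∈ Q₁, c.card = u) (hQd : (↑Q₁ : Set (Finset V)).PairwiseDisjoint id)
    (hQu : Q₁.biUnion id = Y₀) :
    ∑ b ∈ P₁, ∑ c ∈ Q₁, density G b c = (P₁.card : ℝ) * (Q₁.card : ℝ) * density G X₀ Y₀ := by
  have hX : X₀.card = P₁.card * u := by rw [← hPu]; exact card_biUnion_blocks u P₁ hP hPd
  have hY : Y₀.card = Q₁.card * u := by rw [← hQu]; exact card_biUnion_blocks u Q₁ hQ hQd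
  have hnE : (nE G X₀ Y₀ : ℝ) = ∑ b ∈ P₁, ∑ c ∈ Q₁, (nE G b c : ℝ) := by
    rw [← hPu, ← hQu, nE_biUnion_left G P₁ id _ hPd]
    push_cast
    refine Finset.sum_congr rfl fun b _ => ?_
    rw [nE_biUnion_right G Q₁ id _ hQd]
    push_cast; rfl
  have hupos : (0:ℝ) < u := by exact_mod_cast hu
  rcases Nat.eq_zero_or_pos P₁.card with hP0 | hP0
  · have hP₁ : P₁ = ∅ := Finset.card_eq_zero.mp hP0
    subst hP₁; simp
  rcases Nat.eq_zero_or_pos Q₁.card with hQ0 | hQ0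
  · have hQ₁ : Q₁ = ∅ := Finset.card_eq_zero.mp hQ0
    subst hQ₁; simp
  have h1 : ∑ b ∈ P₁, ∑ c ∈ Q₁, density G b c
      = (∑ b ∈ P₁, ∑ c ∈ Q₁, (nE G b c : ℝ)) / (u * u) := by
    rw [Finset.sum_div]
    refine Finset.sum_congr rfl fun b hb => ?_
    rw [Finset.sum_div]
    refine Finset.sum_congr rfl fun c hc => ?_
    rw [density_eq, hP b hb, hQ c hc]
  rw [h1, ← hnE, density_eq, hX, hY]
  have hp : (0:ℝ) < P₁.card := by exact_mod_cast hP0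
  have hq : (0:ℝ) < Q₁.card := by exact_mod_cast hQ0
  push_cast
  field_simp

lemma jensen_sq {ι : Type*} (s : Finset ι) (f : ι → ℝ) (dbar : ℝ)
    (hsum : ∑ x ∈ s, f x = (s.card : ℝ) * dbar) :
    (s.card : ℝ) * dbar ^ 2 ≤ ∑ x ∈ s, (f x) ^ 2 := by
  have h0 : (0:ℝ) ≤ ∑ x ∈ s, (f x - dbar) ^ 2 :=
    Finset.sum_nonneg fun x _ => sq_nonneg _
  have hexp : ∑ x ∈ s, (f x - dbar) ^ 2
      = (∑ x ∈ s, (f x) ^ 2) - 2 * dbar * (∑ x ∈ s, f x) + (s.card : ℝ) * dbar ^ 2 := by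
    rw [Finset.sum_congr rfl (fun x _ => by ring :
      ∀ x ∈ s, (f x - dbar)^2 = (f x)^2 - 2*dbar*(f x) + dbar^2)]
    rw [Finset.sum_add_distrib, Finset.sum_sub_distrib, ← Finset.mul_sum,
      Finset.sum_const, nsmul_eq_mul]
  have h2 : 2 * dbar * (∑ x ∈ s, f x) = 2 * (s.card : ℝ) * dbar ^ 2 := by rw [hsum]; ring
  linarith [h0, hexp, h2]

lemma defect_sq {ι : Type*} [DecidableEq ι] (s t : Finset ι) (hts : t ⊆ s) (f : ι → ℝ)
    (dbar : ℝ) (hsum : ∑ x ∈ s, f x = (s.card : ℝ) * dbar) (ht : 0 < t.card) :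
    (s.card : ℝ) * dbar ^ 2 + (∑ x ∈ t, (f x - dbar)) ^ 2 / (t.card : ℝ)
      ≤ ∑ x ∈ s, (f x) ^ 2 := by
  have hexp : ∑ x ∈ s, (f x - dbar) ^ 2
      = (∑ x ∈ s, (f x) ^ 2) - (s.card : ℝ) * dbar ^ 2 := by
    rw [Finset.sum_congr rfl (fun x _ => by ring :
      ∀ x ∈ s, (f x - dbar)^2 = (f x)^2 - 2*dbar*(f x) + dbar^2)]
    rw [Finset.sum_add_distrib, Finset.sum_sub_distrib, ← Finset.mul_sum,
      Finset.sum_const, nsmul_eq_mul, hsum]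
    ring
  have hsub : ∑ x ∈ t, (f x - dbar) ^ 2 ≤ ∑ x ∈ s, (f x - dbar) ^ 2 :=
    Finset.sum_le_sum_of_subset_of_nonneg hts (fun x _ _ => sq_nonneg _)
  have hCS : (∑ x ∈ t, (f x - dbar)) ^ 2 ≤ (t.card : ℝ) * ∑ x ∈ t, (f x - dbar) ^ 2 := by
    exact_mod_cast sq_sum_le_card_mul_sum_sq (s := t) (f := fun x => f x - dbar)
  have htpos : (0:ℝ) < t.card := by exact_mod_cast ht
  have h3 : (∑ x ∈ t, (f x - dbar)) ^ 2 / (t.card : ℝ) ≤ ∑ x ∈ t, (f x - dbar) ^ 2 := by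
    rw [div_le_iff₀ htpos]
    nlinarith [hCS]
  linarith [hexp, hsub, h3]





-- chunk E : pair gain

lemma pair_gain (G : SimpleGraph V) (ε : ℝ) (hε0 : 0 < ε) (D u : ℕ) (hu : 0 < u)
    (hεD : 8 ≤ ε * D) (A B : Finset V) (hA : A.card = D * u) (hB : B.card = D * u)
    (hirr : ¬ EpsRegular G ε A B) :
    ∃ P Q : Finset (Finset V),
      (P.card = D ∧ (∀ b ∈ P, b ⊆ A ∧ b.card = u) ∧
        (↑P : Set (Finset V)).PairwiseDisjoint id ∧ P.biUnion id = A) ∧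
      (Q.card = D ∧ (∀ c ∈ Q, c ⊆ B ∧ c.card = u) ∧
        (↑Q : Set (Finset V)).PairwiseDisjoint id ∧ Q.biUnion id = B) ∧
      (D:ℝ)^2 * (density G A B)^2 + (49/64) * ε^4 * (D:ℝ)^2
        ≤ ∑ p ∈ P, ∑ q ∈ Q, (density G p q)^2 := by
  have hD0 : 0 < D := by
    rcases Nat.eq_zero_or_pos D with h | h
    · exfalso; subst h; simp at hεD; linarith
    · exact h
  rw [EpsRegular] at hirr
  push_neg at hirr
  obtain ⟨X, hXA, Y, hYB, hXc, hYc, hdev⟩ := hirr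
  set a := X.card / u with ha
  set b := Y.card / u with hb
  have hupos : (0:ℝ) < u := by exact_mod_cast hu
  have hDpos : (0:ℝ) < D := by exact_mod_cast hD0
  -- bounds for a
  have hXlb : ε * ((D:ℝ) * u) < X.card := by
    have h := hXc; rw [hA] at h; push_cast at h; linarith
  have hXub : (X.card : ℝ) < ((a:ℝ) + 1) * u := by
    have h2 : X.card < (a + 1) * u := by
      have h3 := Nat.div_add_mod X.card u
      rw [← ha] at h3
      have h4 : X.card % u < u := Nat.mod_lt _ hu
      calc X.card = u * a + X.card % u := h3.symm
        _ < u * a + u := by omega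
        _ = (a + 1) * u := by ring
    exact_mod_cast h2
  have hXmul : a * u ≤ X.card := Nat.div_mul_le_self _ _
  have haR : (7/8) * (ε * D) ≤ (a:ℝ) := by
    have h5 : ε * (D:ℝ) * u < ((a:ℝ) + 1) * u := by
      calc ε * (D:ℝ) * u = ε * ((D:ℝ) * u) := by ring
        _ < (X.card : ℝ) := hXlb
        _ < ((a:ℝ) + 1) * u := hXub
    have h6 : ε * (D:ℝ) < (a:ℝ) + 1 := lt_of_mul_lt_mul_right h5 hupos.le
    linarith
  have ha1 : 1 ≤ a := by
    have : (1:ℝ) ≤ (a:ℝ) := by nlinarith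
    exact_mod_cast this
  have haD : a ≤ D := by
    have h7 : a * u ≤ D * u := by
      calc a * u ≤ X.card := hXmul
        _ ≤ A.card := Finset.card_le_card hXA
        _ = D * u := hA
    exact Nat.le_of_mul_le_mul_right h7 hu
  -- bounds for b
  have hYlb : ε * ((D:ℝ) * u) < Y.card := by
    have h := hYc; rw [hB] at h; push_cast at h; linarith
  have hYub : (Y.card : ℝ) < ((b:ℝ) + 1) * u := by
    have h2 : Y.card < (b + 1) * u := by
      have h3 := Nat.div_add_mod Y.card u
      rw [← hb] at h3
      have h4 : Y.card % u < u := Nat.mod_lt _ hu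
      calc Y.card = u * b + Y.card % u := h3.symm
        _ < u * b + u := by omega
        _ = (b + 1) * u := by ring
    exact_mod_cast h2
  have hYmul : b * u ≤ Y.card := Nat.div_mul_le_self _ _
  have hbR : (7/8) * (ε * D) ≤ (b:ℝ) := by
    have h5 : ε * (D:ℝ) * u < ((b:ℝ) + 1) * u := by
      calc ε * (D:ℝ) * u = ε * ((D:ℝ) * u) := by ring
        _ < (Y.card : ℝ) := hYlb
        _ < ((b:ℝ) + 1) * u := hYub
    have h6 : ε * (D:ℝ) < (b:ℝ) + 1 := lt_of_mul_lt_mul_right h5 hupos.le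
    linarith
  have hb1 : 1 ≤ b := by
    have : (1:ℝ) ≤ (b:ℝ) := by nlinarith
    exact_mod_cast this
  have hbD : b ≤ D := by
    have h7 : b * u ≤ D * u := by
      calc b * u ≤ Y.card := hYmul
        _ ≤ B.card := Finset.card_le_card hYB
        _ = D * u := hB
    exact Nat.le_of_mul_le_mul_right h7 hu
  -- extreme subsets
  obtain ⟨X₀, Y₀, hX₀sub, hX₀card, hY₀sub, hY₀card, hsq⟩ :
      ∃ X₀ Y₀ : Finset V, X₀ ⊆ X ∧ X₀.card = a * u ∧ Y₀ ⊆ Y ∧ Y₀.card = b * u ∧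
        ε^2 ≤ (density G X₀ Y₀ - density G A B)^2 := by
    rcases le_abs.mp hdev with hpos | hneg
    · obtain ⟨X₀, hX₀X, hX₀c, hd1⟩ := exists_subset_density_ge G X Y (a*u)
        (Nat.one_le_iff_ne_zero.mpr (Nat.mul_ne_zero (by omega) (by omega))) hXmul
      obtain ⟨Y₀, hY₀Y, hY₀c, hd2⟩ := exists_subset_density_ge G Y X₀ (b*u)
        (Nat.one_le_iff_ne_zero.mpr (Nat.mul_ne_zero (by omega) (by omega))) hYmul
      refine ⟨X₀, Y₀, hX₀X, hX₀c, hY₀Y, hY₀c, ?_⟩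
      have hc1 : density G X₀ Y ≤ density G X₀ Y₀ := by
        rw [density_comm G X₀ Y, density_comm G X₀ Y₀]; exact hd2
      have h9 : ε ≤ density G X₀ Y₀ - density G A B := by linarith
      exact pow_le_pow_left₀ hε0.le h9 2
    · obtain ⟨X₀, hX₀X, hX₀c, hd1⟩ := exists_subset_density_le G X Y (a*u)
        (Nat.one_le_iff_ne_zero.mpr (Nat.mul_ne_zero (by omega) (by omega))) hXmul
      obtain ⟨Y₀, hY₀Y, hY₀c, hd2⟩ := exists_subset_density_le G Y X₀ (b*u)
        (Nat.one_le_iff_ne_zero.mpr (Nat.mul_ne_zero (by omega) (by omega))) hYmul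
      refine ⟨X₀, Y₀, hX₀X, hX₀c, hY₀Y, hY₀c, ?_⟩
      have hc1 : density G X₀ Y₀ ≤ density G X₀ Y := by
        rw [density_comm G X₀ Y, density_comm G X₀ Y₀]; exact hd2
      have h9 : ε ≤ -(density G X₀ Y₀ - density G A B) := by linarith
      calc ε^2 ≤ (-(density G X₀ Y₀ - density G A B))^2 := pow_le_pow_left₀ hε0.le h9 2
        _ = (density G X₀ Y₀ - density G A B)^2 := by ring
  -- blocks
  obtain ⟨P, P₁, hP₁P, hPcard, hP₁card, hPmem, hPdisj, hPun, hP₁un⟩ :=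
    exists_blocks_split u hu a D A X₀ (hX₀sub.trans hXA) hA hX₀card haD
  obtain ⟨Q, Q₁, hQ₁Q, hQcard, hQ₁card, hQmem, hQdisj, hQun, hQ₁un⟩ :=
    exists_blocks_split u hu b D B Y₀ (hY₀sub.trans hYB) hB hY₀card hbD
  refine ⟨P, Q, ⟨hPcard, hPmem, hPdisj, hPun⟩, ⟨hQcard, hQmem, hQdisj, hQun⟩, ?_⟩
  -- sums
  have hSfull : ∑ p ∈ P, ∑ q ∈ Q, density G p q
      = (D:ℝ) * (D:ℝ) * density G A B := by
    have := sum_density_blocks G u hu P Q A B (fun p hp => (hPmem p hp).2) hPdisj hPun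
      (fun q hq => (hQmem q hq).2) hQdisj hQun
    rw [this, hPcard, hQcard]
  have hP₁mem : ∀ p ∈ P₁, p.card = u := fun p hp => (hPmem p (hP₁P hp)).2
  have hQ₁mem : ∀ q ∈ Q₁, q.card = u := fun q hq => (hQmem q (hQ₁Q hq)).2
  have hP₁disj : (↑P₁ : Set (Finset V)).PairwiseDisjoint id :=
    hPdisj.subset (by exact_mod_cast hP₁P)
  have hQ₁disj : (↑Q₁ : Set (Finset V)).PairwiseDisjoint id :=
    hQdisj.subset (by exact_mod_cast hQ₁Q)
  have hSsub : ∑ p ∈ P₁, ∑ q ∈ Q₁, density G p q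
      = (a:ℝ) * (b:ℝ) * density G X₀ Y₀ := by
    have := sum_density_blocks G u hu P₁ Q₁ X₀ Y₀ hP₁mem hP₁disj hP₁un hQ₁mem hQ₁disj hQ₁un
    rw [this, hP₁card, hQ₁card]
  -- defect inequality on the product
  set f : Finset V × Finset V → ℝ := fun p => density G p.1 p.2 with hf
  set dbar := density G A B with hdbar
  have hsum : ∑ p ∈ P ×ˢ Q, f p = (((P ×ˢ Q).card : ℝ)) * dbar := by
    rw [Finset.sum_product, Finset.card_product, hPcard, hQcard]
    push_cast
    exact hSfull
  have htpos : 0 < (P₁ ×ˢ Q₁).card := by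
    rw [Finset.card_product, hP₁card, hQ₁card]
    have : 0 < a * b := Nat.mul_pos (by omega) (by omega)
    exact this
  have hdef := defect_sq (P ×ˢ Q) (P₁ ×ˢ Q₁)
    (Finset.product_subset_product hP₁P hQ₁Q) f dbar hsum htpos
  have hsumt : ∑ p ∈ P₁ ×ˢ Q₁, (f p - dbar)
      = (a:ℝ) * (b:ℝ) * (density G X₀ Y₀ - dbar) := by
    rw [Finset.sum_sub_distrib, Finset.sum_const, Finset.sum_product,
      Finset.card_product, hP₁card, hQ₁card, nsmul_eq_mul]
    push_cast
    rw [hSsub]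
    ring
  have hcardt : ((P₁ ×ˢ Q₁).card : ℝ) = (a:ℝ) * (b:ℝ) := by
    rw [Finset.card_product, hP₁card, hQ₁card]; push_cast; ring
  have habpos : (0:ℝ) < (a:ℝ) * (b:ℝ) := by
    have h1 : (0:ℝ) < (a:ℝ) := by exact_mod_cast ha1
    have h2 : (0:ℝ) < (b:ℝ) := by exact_mod_cast hb1
    exact mul_pos h1 h2
  have hgain : (49/64) * ε^4 * (D:ℝ)^2
      ≤ (∑ p ∈ P₁ ×ˢ Q₁, (f p - dbar))^2 / ((P₁ ×ˢ Q₁).card : ℝ) := by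
    rw [hsumt, hcardt]
    have hδ : ε^2 ≤ (density G X₀ Y₀ - dbar)^2 := hsq
    have hab : (49/64) * (ε * D)^2 ≤ (a:ℝ) * (b:ℝ) := by
      have h1 : (0:ℝ) ≤ (7/8) * (ε * D) := by nlinarith
      calc (49/64) * (ε * D)^2 = ((7/8)*(ε*D)) * ((7/8)*(ε*D)) := by ring
        _ ≤ (a:ℝ) * (b:ℝ) := mul_le_mul haR hbR h1 (le_trans h1 haR)
    have hexpand : ((a:ℝ) * b * (density G X₀ Y₀ - dbar))^2 / ((a:ℝ) * b)
        = ((a:ℝ) * b) * (density G X₀ Y₀ - dbar)^2 := by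
      field_simp
    rw [hexpand]
    calc (49/64) * ε^4 * (D:ℝ)^2 = ((49/64) * (ε*D)^2) * ε^2 := by ring
      _ ≤ ((a:ℝ)*b) * ε^2 := by
          apply mul_le_mul_of_nonneg_right hab (by positivity)
      _ ≤ ((a:ℝ)*b) * (density G X₀ Y₀ - dbar)^2 := by
          apply mul_le_mul_of_nonneg_left hδ habpos.le
  have hfin : ∑ p ∈ P ×ˢ Q, (f p)^2 = ∑ p ∈ P, ∑ q ∈ Q, (density G p q)^2 := by
    rw [Finset.sum_product]
  have hcards : ((P ×ˢ Q).card : ℝ) = (D:ℝ)^2 := by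
    rw [Finset.card_product, hPcard, hQcard]; push_cast; ring
  rw [← hfin]
  calc (D:ℝ)^2 * (density G A B)^2 + (49/64) * ε^4 * (D:ℝ)^2
      ≤ ((P ×ˢ Q).card : ℝ) * dbar^2
        + (∑ p ∈ P₁ ×ˢ Q₁, (f p - dbar))^2 / ((P₁ ×ˢ Q₁).card : ℝ) := by
        rw [hcards]
        exact add_le_add (le_refl _) hgain
    _ ≤ ∑ p ∈ P ×ˢ Q, (f p)^2 := hdef

-- chunk F



lemma sum_piFinset_two {γ : Type*} [DecidableEq γ] {k : ℕ} (P : Fin k → Finset γ)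
    (hne : ∀ l, (P l).Nonempty) (i j : Fin k) (hij : i ≠ j) (F : γ → γ → ℝ) :
    ∑ c ∈ Fintype.piFinset P, F (c i) (c j)
      = ((∏ l ∈ (Finset.univ \ {j}) \ {i}, (P l).card : ℕ) : ℝ)
          * ∑ x ∈ P i, ∑ y ∈ P j, F x y := by
  classical
  set S := Fintype.piFinset P with hS
  set φm : (Fin k → γ) → γ × γ := fun c => (c i, c j) with hφ
  have himg : S.image φm = P i ×ˢ P j := by
    ext q
    simp only [Finset.mem_image, Finset.mem_product]
    constructor
    · rintro ⟨c, hc, rfl⟩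
      rw [hS, Fintype.mem_piFinset] at hc
      exact ⟨hc i, hc j⟩
    · rintro ⟨h1, h2⟩
      refine ⟨fun l => if h : l = i then q.1 else if h' : l = j then q.2 else (hne l).choose, ?_, ?_⟩
      · rw [hS, Fintype.mem_piFinset]
        intro l
        by_cases h : l = i
        · subst h; simpa using h1
        · by_cases h' : l = j
          · subst h'; simp [h]; exact h2
          · simp [h, h']; exact (hne l).choose_spec
      · rw [hφ]
        dsimp only
        rw [dif_pos rfl, dif_neg (Ne.symm hij), dif_pos rfl]
  have hfiber : ∀ q ∈ P i ×ˢ P j,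
      (S.filter (fun c => φm c = q)).card
        = ∏ l ∈ (Finset.univ \ {j}) \ {i}, (P l).card := by
    rintro ⟨x, y⟩ hq
    rw [Finset.mem_product] at hq
    have hfe : S.filter (fun c => φm c = (x, y))
        = Fintype.piFinset (Function.update (Function.update P i {x}) j {y}) := by
      ext c
      simp only [Finset.mem_filter, hS, Fintype.mem_piFinset, hφ, Prod.mk.injEq]
      constructor
      · rintro ⟨hc, hcx, hcy⟩
        intro l
        rcases eq_or_ne l j with rfl | hlj
        · simp [Function.update_self, hcy]
        · rw [Function.update_of_ne hlj]
          rcases eq_or_ne l i with rfl | hli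
          · simp [Function.update_self, hcx]
          · rw [Function.update_of_ne hli]; exact hc l
      · intro hc
        have hcx : c i = x := by
          have := hc i
          rw [Function.update_of_ne hij, Function.update_self] at this
          simpa using this
        have hcy : c j = y := by
          have := hc j
          rw [Function.update_self] at this
          simpa using this
        refine ⟨fun l => ?_, hcx, hcy⟩
        rcases eq_or_ne l j with rfl | hlj
        · rw [hcy]; exact hq.2
        · rcases eq_or_ne l i with rfl | hli
          · rw [hcx]; exact hq.1
          · have := hc l
            rw [Function.update_of_ne hlj, Function.update_of_ne hli] at this
            exact this
    rw [hfe, Fintype.card_piFinset]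
    have hjmem : j ∈ (Finset.univ : Finset (Fin k)) := Finset.mem_univ j
    rw [show (∏ l : Fin k, ((Function.update (Function.update P i {x}) j {y}) l).card)
        = ∏ l ∈ Finset.univ, (Function.update (fun l' => ((Function.update P i {x}) l').card) j ({y} : Finset γ).card) l from Finset.prod_congr rfl (by
          intro l _
          rcases eq_or_ne l j with rfl | hlj
          · simp [Function.update_self]
          · rw [Function.update_of_ne hlj, Function.update_of_ne hlj])]
    rw [Finset.prod_update_of_mem hjmem]
    have himem : i ∈ (Finset.univ : Finset (Fin k)) \ {j} := by
      simp [hij]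
    rw [show (∏ l ∈ Finset.univ \ {j}, ((Function.update P i ({x} : Finset γ)) l).card)
        = ∏ l ∈ Finset.univ \ {j}, (Function.update (fun l' => (P l').card) i ({x} : Finset γ).card) l from Finset.prod_congr rfl (by
          intro l _
          rcases eq_or_ne l i with rfl | hli
          · simp [Function.update_self]
          · rw [Function.update_of_ne hli, Function.update_of_ne hli])]
    rw [Finset.prod_update_of_mem himem]
    simp
  calc ∑ c ∈ S, F (c i) (c j)
      = ∑ c ∈ S, (fun q : γ × γ => F q.1 q.2) (φm c) := rfl
    _ = ∑ q ∈ S.image φm, (S.filter (fun c => φm c = q)).card • (fun q : γ × γ => F q.1 q.2) q :=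
        Finset.sum_comp (s := S) (fun q : γ × γ => F q.1 q.2) φm
    _ = ∑ q ∈ P i ×ˢ P j, ((∏ l ∈ (Finset.univ \ {j}) \ {i}, (P l).card : ℕ) : ℝ) * F q.1 q.2 := by
        rw [himg]
        refine Finset.sum_congr rfl fun q hq => ?_
        rw [hfiber q hq, nsmul_eq_mul]
    _ = ((∏ l ∈ (Finset.univ \ {j}) \ {i}, (P l).card : ℕ) : ℝ) * ∑ x ∈ P i, ∑ y ∈ P j, F x y := by
        rw [← Finset.mul_sum, Finset.sum_product]


-- chunk G : leaf refinement

def pairs (k : ℕ) : Finset (Fin k × Fin k) :=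
  Finset.univ.filter (fun p => p.1 < p.2)

/-- Refining an irregular leaf: all coordinates are split into `D` equal blocks,
and the mean of `d - d²` over the children drops by `(49/64)ε⁴`. -/
lemma leaf_refine (G : SimpleGraph V) (ε : ℝ) (hε0 : 0 < ε) (k D u : ℕ) (hu : 0 < u)
    (hεD : 8 ≤ ε * D) (l : Fin k → Finset V) (hcard : ∀ i, (l i).card = D * u)
    (hirr : ∃ p ∈ pairs k, ¬ EpsRegular G ε (l p.1) (l p.2)) :
    ∃ P : Fin k → Finset (Finset V),
      (∀ i, (P i).card = D ∧ (∀ b ∈ P i, b ⊆ l i ∧ b.card = u) ∧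
        (↑(P i) : Set (Finset V)).PairwiseDisjoint id ∧ (P i).biUnion id = l i) ∧
      ∑ c ∈ Fintype.piFinset P, (∑ p ∈ pairs k,
          (density G (c p.1) (c p.2) - (density G (c p.1) (c p.2))^2))
        ≤ (D:ℝ)^k * ((∑ p ∈ pairs k,
            (density G (l p.1) (l p.2) - (density G (l p.1) (l p.2))^2)) - (49/64)*ε^4) := by
  classical
  have hD0 : 0 < D := by
    rcases Nat.eq_zero_or_pos D with h | h
    · exfalso; subst h; simp at hεD; linarith
    · exact h
  obtain ⟨p₀, hp₀mem, hp₀irr⟩ := hirr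
  have hp₀lt : p₀.1 < p₀.2 := (Finset.mem_filter.mp hp₀mem).2
  have hp₀ne : p₀.1 ≠ p₀.2 := Fin.ne_of_lt hp₀lt
  have hk2 : 2 ≤ k := by
    have h1 : (p₀.1 : ℕ) < (p₀.2 : ℕ) := hp₀lt
    have h2 : (p₀.2 : ℕ) < k := p₀.2.isLt
    omega
  obtain ⟨PA, QB, ⟨hPAcard, hPAmem, hPAdisj, hPAun⟩, ⟨hQBcard, hQBmem, hQBdisj, hQBun⟩, hgain⟩ :=
    pair_gain G ε hε0 D u hu hεD (l p₀.1) (l p₀.2) (hcard p₀.1) (hcard p₀.2) hp₀irr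
  -- plain blocks for the other coordinates
  have hplain : ∀ i : Fin k, ∃ P : Finset (Finset V), P.card = D ∧
      (∀ b ∈ P, b ⊆ l i ∧ b.card = u) ∧
      (↑P : Set (Finset V)).PairwiseDisjoint id ∧ P.biUnion id = l i :=
    fun i => exists_blocks u hu D (l i) (hcard i)
  set P : Fin k → Finset (Finset V) := fun i =>
    if i = p₀.1 then PA else if i = p₀.2 then QB else (hplain i).choose with hPdef
  have hPprop : ∀ i, (P i).card = D ∧ (∀ b ∈ P i, b ⊆ l i ∧ b.card = u) ∧
      (↑(P i) : Set (Finset V)).PairwiseDisjoint id ∧ (P i).biUnion id = l i := by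
    intro i
    rw [hPdef]
    dsimp only
    rcases eq_or_ne i p₀.1 with rfl | h1
    · rw [if_pos rfl]; exact ⟨hPAcard, hPAmem, hPAdisj, hPAun⟩
    · rw [if_neg h1]
      rcases eq_or_ne i p₀.2 with rfl | h2
      · rw [if_pos rfl]; exact ⟨hQBcard, hQBmem, hQBdisj, hQBun⟩
      · rw [if_neg h2]; exact (hplain i).choose_spec
  refine ⟨P, hPprop, ?_⟩
  have hne : ∀ i, (P i).Nonempty := fun i => Finset.card_pos.mp (by rw [(hPprop i).1]; exact hD0)
  -- swap sums
  rw [Finset.sum_comm]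
  -- the constant D^(k-2)
  have hconst : ∀ p : Fin k × Fin k, p ∈ pairs k →
      ((∏ m ∈ (Finset.univ \ {p.2}) \ {p.1}, (P m).card : ℕ) : ℝ) = (D:ℝ)^(k-2) := by
    intro p hp
    have hplt : p.1 < p.2 := (Finset.mem_filter.mp hp).2
    have hpne : p.1 ≠ p.2 := Fin.ne_of_lt hplt
    have hcard2 : ((Finset.univ \ {p.2}) \ {p.1}).card = k - 2 := by
      rw [Finset.card_sdiff_of_subset (by simp [hpne]), Finset.card_sdiff_of_subset (by simp)]
      simp
      omega
    rw [Finset.prod_congr rfl (fun m _ => (hPprop m).1), Finset.prod_const, hcard2]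
    push_cast
    rfl
  -- per-pair estimates
  have hinner : ∀ p : Fin k × Fin k, p ∈ pairs k →
      ∑ c ∈ Fintype.piFinset P,
          (density G (c p.1) (c p.2) - (density G (c p.1) (c p.2))^2)
        ≤ (D:ℝ)^k * ((density G (l p.1) (l p.2) - (density G (l p.1) (l p.2))^2)
            - (if p = p₀ then (49/64)*ε^4 else 0)) := by
    intro p hp
    have hplt : p.1 < p.2 := (Finset.mem_filter.mp hp).2
    have hpne : p.1 ≠ p.2 := Fin.ne_of_lt hplt
    have hsplit := sum_piFinset_two P hne p.1 p.2 hpne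
      (fun x y => density G x y - (density G x y)^2)
    rw [hsplit, hconst p hp]
    have hPp1 := hPprop p.1
    have hPp2 := hPprop p.2
    have hsum1 : ∑ x ∈ P p.1, ∑ y ∈ P p.2, density G x y
        = (D:ℝ) * (D:ℝ) * density G (l p.1) (l p.2) := by
      have := sum_density_blocks G u hu (P p.1) (P p.2) (l p.1) (l p.2)
        (fun b hb => (hPp1.2.1 b hb).2) hPp1.2.2.1 hPp1.2.2.2
        (fun b hb => (hPp2.2.1 b hb).2) hPp2.2.2.1 hPp2.2.2.2
      rw [this, hPp1.1, hPp2.1]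
    have hsum2 : (D:ℝ)^2 * (density G (l p.1) (l p.2))^2
          + (if p = p₀ then (49/64)*ε^4*(D:ℝ)^2 else 0)
        ≤ ∑ x ∈ P p.1, ∑ y ∈ P p.2, (density G x y)^2 := by
      rcases eq_or_ne p p₀ with rfl | hpp0
      · rw [if_pos rfl]
        have hPA : P p.1 = PA := by rw [hPdef]; dsimp only; rw [if_pos rfl]
        have hQB : P p.2 = QB := by
          rw [hPdef]; dsimp only; rw [if_neg (Ne.symm hpne), if_pos rfl]
        rw [hPA, hQB]
        exact hgain
      · rw [if_neg hpp0, add_zero]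
        -- plain Jensen
        have hsumf : ∑ q ∈ (P p.1) ×ˢ (P p.2), density G q.1 q.2
            = (((P p.1) ×ˢ (P p.2)).card : ℝ) * density G (l p.1) (l p.2) := by
          rw [Finset.sum_product, Finset.card_product, hPp1.1, hPp2.1]
          push_cast
          rw [hsum1]
        have := jensen_sq ((P p.1) ×ˢ (P p.2)) (fun q => density G q.1 q.2)
          (density G (l p.1) (l p.2)) hsumf
        rw [Finset.card_product, hPp1.1, hPp2.1] at this
        push_cast at this
        rw [Finset.sum_product] at this
        calc (D:ℝ)^2 * (density G (l p.1) (l p.2))^2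
            = (D:ℝ) * (D:ℝ) * (density G (l p.1) (l p.2))^2 := by ring
          _ ≤ ∑ x ∈ P p.1, ∑ y ∈ P p.2, (density G x y)^2 := this
    have hsplitsum : ∑ x ∈ P p.1, ∑ y ∈ P p.2,
        (density G x y - (density G x y)^2)
        = (∑ x ∈ P p.1, ∑ y ∈ P p.2, density G x y)
          - ∑ x ∈ P p.1, ∑ y ∈ P p.2, (density G x y)^2 := by
      rw [← Finset.sum_sub_distrib]
      exact Finset.sum_congr rfl fun x _ => by rw [← Finset.sum_sub_distrib]
    rw [hsplitsum, hsum1]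
    have hDk : (D:ℝ)^(k-2) * (D:ℝ)^2 = (D:ℝ)^k := by
      rw [← pow_add]
      congr 1
      omega
    have hDk2pos : (0:ℝ) < (D:ℝ)^(k-2) := by positivity
    have hmul := mul_le_mul_of_nonneg_left hsum2 hDk2pos.le
    set dd := density G (l p.1) (l p.2) with hdd
    set S2 := ∑ x ∈ P p.1, ∑ y ∈ P p.2, (density G x y)^2 with hS2
    rcases eq_or_ne p p₀ with rfl | hpp0
    · rw [if_pos rfl] at hmul ⊢
      calc (D:ℝ)^(k-2) * ((D:ℝ)*(D:ℝ)*dd - S2)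
          = (D:ℝ)^(k-2)*((D:ℝ)*(D:ℝ)*dd) - (D:ℝ)^(k-2)*S2 := by ring
        _ ≤ (D:ℝ)^(k-2)*((D:ℝ)*(D:ℝ)*dd)
              - (D:ℝ)^(k-2)*((D:ℝ)^2*dd^2 + 49/64*ε^4*(D:ℝ)^2) := by linarith [hmul]
        _ = (D:ℝ)^k*(dd - dd^2 - 49/64*ε^4) := by rw [← hDk]; ring
    · rw [if_neg hpp0] at hmul ⊢
      rw [add_zero] at hmul
      calc (D:ℝ)^(k-2) * ((D:ℝ)*(D:ℝ)*dd - S2)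
          = (D:ℝ)^(k-2)*((D:ℝ)*(D:ℝ)*dd) - (D:ℝ)^(k-2)*S2 := by ring
        _ ≤ (D:ℝ)^(k-2)*((D:ℝ)*(D:ℝ)*dd) - (D:ℝ)^(k-2)*((D:ℝ)^2*dd^2) := by linarith [hmul]
        _ = (D:ℝ)^k*(dd - dd^2 - 0) := by rw [← hDk]; ring
  calc ∑ p ∈ pairs k, ∑ c ∈ Fintype.piFinset P,
        (density G (c p.1) (c p.2) - (density G (c p.1) (c p.2))^2)
      ≤ ∑ p ∈ pairs k, (D:ℝ)^k * ((density G (l p.1) (l p.2)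
          - (density G (l p.1) (l p.2))^2) - (if p = p₀ then (49/64)*ε^4 else 0)) :=
        Finset.sum_le_sum hinner
    _ = (D:ℝ)^k * ((∑ p ∈ pairs k, (density G (l p.1) (l p.2)
          - (density G (l p.1) (l p.2))^2)) - (49/64)*ε^4) := by
        rw [← Finset.mul_sum]
        congr 1
        rw [Finset.sum_sub_distrib]
        congr 1
        rw [Finset.sum_ite_eq' (pairs k) p₀ (fun _ => (49/64)*ε^4)]
        rw [if_pos hp₀mem]


-- chunk H : the iteration

noncomputable def phi (G : SimpleGraph V) (k : ℕ) (l : Fin k → Finset V) : ℝ :=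
  ∑ p ∈ pairs k, (density G (l p.1) (l p.2) - (density G (l p.1) (l p.2))^2)

lemma phi_nonneg (G : SimpleGraph V) (k : ℕ) (l : Fin k → Finset V) : 0 ≤ phi G k l := by
  refine Finset.sum_nonneg fun p _ => ?_
  have h1 := density_nonneg G (l p.1) (l p.2)
  have h2 := density_le_one G (l p.1) (l p.2)
  nlinarith

lemma phi_le (G : SimpleGraph V) (k : ℕ) (l : Fin k → Finset V) :
    phi G k l ≤ (k:ℝ)^2 / 4 := by
  have h1 : phi G k l ≤ ∑ _p ∈ pairs k, (1/4 : ℝ) := by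
    refine Finset.sum_le_sum fun p _ => ?_
    have h2 := density_nonneg G (l p.1) (l p.2)
    have h3 := density_le_one G (l p.1) (l p.2)
    nlinarith [sq_nonneg (density G (l p.1) (l p.2) - 1/2)]
  have h2 : ((pairs k).card : ℝ) ≤ (k:ℝ)^2 := by
    have h3 : (pairs k).card ≤ k * k := by
      calc (pairs k).card ≤ (Finset.univ : Finset (Fin k × Fin k)).card :=
            Finset.card_filter_le _ _
        _ = k * k := by simp [Finset.card_univ]
    calc ((pairs k).card : ℝ) ≤ ((k * k : ℕ) : ℝ) := by exact_mod_cast h3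
      _ = (k:ℝ)^2 := by push_cast; ring
  rw [Finset.sum_const, nsmul_eq_mul] at h1
  calc phi G k l ≤ ((pairs k).card : ℝ) * (1/4) := h1
    _ ≤ (k:ℝ)^2 * (1/4) := by linarith
    _ = (k:ℝ)^2/4 := by ring

lemma msum_affine {α : Type*} (L : Multiset α) (f : α → ℝ) (a b : ℝ) :
    (L.map (fun x => a * f x - b)).sum = a * (L.map f).sum - (Multiset.card L) * b := by
  induction L using Multiset.induction_on with
  | empty => simp
  | cons x s ih =>
      simp only [Multiset.map_cons, Multiset.sum_cons, ih, Multiset.card_cons]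
      push_cast
      ring

lemma iterate_lemma (G : SimpleGraph V) (ε : ℝ) (hε0 : 0 < ε) (k DD T q : ℕ)
    (hq : 0 < q) (hεD : 8 ≤ ε * DD)
    (W : Fin k → Finset V) (hW : ∀ i, (W i).card = q * DD ^ T)
    (hT : (k:ℝ)^2 / 4 < (T:ℝ) * ((49/64) * ε^4)) :
    ∃ P : Fin k → Finset V, (∀ i, P i ⊆ W i) ∧
      (∃ c : ℕ, (∀ i, (P i).card = c) ∧ q ≤ c) ∧
      ∀ p ∈ pairs k, EpsRegular G ε (P p.1) (P p.2) := by
  classical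
  have hD0 : 0 < DD := by
    rcases Nat.eq_zero_or_pos DD with h | h
    · exfalso; subst h; simp at hεD; linarith
    · exact h
  by_contra hno
  push_neg at hno
  set gq : ℝ := (49:ℝ)/64 * ε^4 with hgq
  have key : ∀ t : ℕ, t ≤ T → ∃ L : Multiset (Fin k → Finset V),
      Multiset.card L = (DD^k)^t ∧
      (∀ l ∈ L, (∀ i, l i ⊆ W i) ∧ (∀ i, (l i).card = q * DD^(T - t))) ∧
      (L.map (phi G k)).sum ≤ (((DD^k)^t : ℕ) : ℝ) * (phi G k W - t * gq) := by
    intro t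
    induction t with
    | zero =>
        intro _
        refine ⟨{W}, by simp, ?_, ?_⟩
        · intro l hl
          rw [Multiset.mem_singleton] at hl
          subst hl
          exact ⟨fun i => Finset.Subset.refl _, fun i => by rw [Nat.sub_zero]; exact hW i⟩
        · simp
    | succ t ih =>
        intro ht1
        obtain ⟨L, hLcard, hLmem, hLsum⟩ := ih (by omega)
        set u : ℕ := q * DD^(T - (t+1)) with hu_def
        have hu : 0 < u := by positivity
        have hsu : q * DD^(T - t) = DD * u := by
          have he : T - t = (T - (t+1)) + 1 := by omega
          rw [hu_def, he, pow_succ]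
          ring
        -- every leaf is irregular
        have hirr : ∀ l ∈ L, (∀ i, (l i).card = DD * u) ∧
            (∃ p ∈ pairs k, ¬ EpsRegular G ε (l p.1) (l p.2)) := by
          intro l hl
          have hmem := hLmem l hl
          have hcard : ∀ i, (l i).card = DD * u := fun i => by rw [(hmem.2 i), hsu]
          refine ⟨hcard, ?_⟩
          refine hno l hmem.1 ⟨q * DD^(T-t), hmem.2, ?_⟩
          exact Nat.le_mul_of_pos_right q (by positivity)
        -- children
        set F : (Fin k → Finset V) → Multiset (Fin k → Finset V) := fun l =>
          if h : (∀ i, (l i).card = DD * u) ∧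
              (∃ p ∈ pairs k, ¬ EpsRegular G ε (l p.1) (l p.2)) then
            (Fintype.piFinset ((leaf_refine G ε hε0 k DD u hu hεD l h.1 h.2).choose)).val
          else {l} with hF
        have hFprop : ∀ l ∈ L,
            (Multiset.card (F l) = DD^k) ∧
            (∀ l' ∈ F l, (∀ i, l' i ⊆ l i) ∧ (∀ i, (l' i).card = u)) ∧
            ((F l).map (phi G k)).sum ≤ (DD:ℝ)^k * (phi G k l - gq) := by
          intro l hl
          have h := hirr l hl
          have hspec := (leaf_refine G ε hε0 k DD u hu hεD l h.1 h.2).choose_spec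
          set Pl := (leaf_refine G ε hε0 k DD u hu hεD l h.1 h.2).choose with hPl
          have hFl : F l = (Fintype.piFinset Pl).val := by
            rw [hF]; dsimp only; rw [dif_pos h]
          refine ⟨?_, ?_, ?_⟩
          · rw [hFl]
            have : Multiset.card (Fintype.piFinset Pl).val = (Fintype.piFinset Pl).card := rfl
            rw [this, Fintype.card_piFinset]
            rw [Finset.prod_congr rfl (fun i _ => (hspec.1 i).1), Finset.prod_const]
            simp
          · intro l' hl'
            rw [hFl] at hl'
            have hl'' : l' ∈ Fintype.piFinset Pl := hl'
            rw [Fintype.mem_piFinset] at hl''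
            constructor
            · intro i; exact ((hspec.1 i).2.1 (l' i) (hl'' i)).1
            · intro i; exact ((hspec.1 i).2.1 (l' i) (hl'' i)).2
          · rw [hFl]
            have heq : ((Fintype.piFinset Pl).val.map (phi G k)).sum
                = ∑ c ∈ Fintype.piFinset Pl, phi G k c := rfl
            rw [heq]
            have := hspec.2
            calc ∑ c ∈ Fintype.piFinset Pl, phi G k c
                = ∑ c ∈ Fintype.piFinset Pl, ∑ p ∈ pairs k,
                    (density G (c p.1) (c p.2) - (density G (c p.1) (c p.2))^2) := rfl
              _ ≤ (DD:ℝ)^k * ((∑ p ∈ pairs k, (density G (l p.1) (l p.2)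
                    - (density G (l p.1) (l p.2))^2)) - (49/64)*ε^4) := hspec.2
              _ = (DD:ℝ)^k * (phi G k l - gq) := rfl
        refine ⟨L.bind F, ?_, ?_, ?_⟩
        · rw [Multiset.card_bind]
          have hmapc : L.map (Multiset.card ∘ F) = L.map (fun _ => DD^k) :=
            Multiset.map_congr rfl (fun l hl => (hFprop l hl).1)
          rw [hmapc, Multiset.map_const', Multiset.sum_replicate, hLcard, smul_eq_mul]
          rw [pow_succ]
        · intro l' hl'
          rw [Multiset.mem_bind] at hl'
          obtain ⟨l, hl, hl'F⟩ := hl'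
          have h1 := (hFprop l hl).2.1 l' hl'F
          exact ⟨fun i => (h1.1 i).trans ((hLmem l hl).1 i), h1.2⟩
        · rw [Multiset.map_bind, Multiset.sum_bind]
          have hb : ((L.map (fun l => ((F l).map (phi G k)).sum)).sum)
              ≤ ((L.map (fun l => (DD:ℝ)^k * (phi G k l) - (DD:ℝ)^k * gq)).sum) := by
            apply Multiset.sum_map_le_sum_map
            intro l hl
            have h1 := (hFprop l hl).2.2
            have h2 : (DD:ℝ)^k * (phi G k l - gq)
                = (DD:ℝ)^k * phi G k l - (DD:ℝ)^k * gq := by ring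
            linarith [h1, h2]
          calc (Multiset.map (fun a => (Multiset.map (phi G k) (F a)).sum) L).sum
              ≤ ((L.map (fun l => (DD:ℝ)^k * (phi G k l) - (DD:ℝ)^k * gq)).sum) := hb
            _ = (DD:ℝ)^k * (L.map (phi G k)).sum - (Multiset.card L) * ((DD:ℝ)^k * gq) :=
                msum_affine L (phi G k) ((DD:ℝ)^k) ((DD:ℝ)^k * gq)
            _ ≤ (DD:ℝ)^k * ((((DD^k)^t : ℕ):ℝ) * (phi G k W - t * gq))
                - (Multiset.card L) * ((DD:ℝ)^k * gq) := by
                have hDk : (0:ℝ) < (DD:ℝ)^k := by positivity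
                have := mul_le_mul_of_nonneg_left hLsum hDk.le
                linarith [this]
            _ = (((DD^k)^(t+1) : ℕ):ℝ) * (phi G k W - (((t+1 : ℕ)):ℝ) * gq) := by
                rw [hLcard]
                push_cast
                ring
  obtain ⟨L, hLcard, _, hLsum⟩ := key T (le_refl T)
  have hpos : (0:ℝ) ≤ (L.map (phi G k)).sum := by
    apply Multiset.sum_nonneg
    intro x hx
    rw [Multiset.mem_map] at hx
    obtain ⟨l, _, rfl⟩ := hx
    exact phi_nonneg G k l
  have hneg : (((DD^k)^T : ℕ):ℝ) * (phi G k W - T * gq) < 0 := by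
    apply mul_neg_of_pos_of_neg
    · positivity
    · have := phi_le G k W
      linarith [hT]
  linarith [hpos, hLsum, hneg]


-- chunk I : final assembly helpers

lemma eps_regular_singleton (G : SimpleGraph V) (ε : ℝ) (hε0 : 0 < ε) (a b : V) :
    EpsRegular G ε {a} {b} := by
  intro X hX Y hY hXc hYc
  have hXcard : 1 ≤ X.card := by
    have h0 : (0:ℝ) < (X.card:ℝ) := by
      have h1 := hXc
      simp only [Finset.card_singleton, Nat.cast_one, mul_one] at h1
      linarith
    have : 0 < X.card := by exact_mod_cast h0
    omega
  have hX' : X = {a} := Finset.eq_of_subset_of_card_le hX (by simpa using hXcard)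
  have hYcard : 1 ≤ Y.card := by
    have h0 : (0:ℝ) < (Y.card:ℝ) := by
      have h1 := hYc
      simp only [Finset.card_singleton, Nat.cast_one, mul_one] at h1
      linarith
    have : 0 < Y.card := by exact_mod_cast h0
    omega
  have hY' : Y = {b} := Finset.eq_of_subset_of_card_le hY (by simpa using hYcard)
  rw [hX', hY']
  simpa using hε0

lemma natdiv_gt (a b : ℕ) (hb : 0 < b) : (a:ℝ)/b - 1 < ((a/b : ℕ):ℝ) := by
  have hbR : (0:ℝ) < b := by exact_mod_cast hb
  have h1 : a < (a/b + 1) * b := by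
    have h3 := Nat.div_add_mod a b
    have h4 : a % b < b := Nat.mod_lt _ hb
    calc a = b * (a/b) + a % b := h3.symm
      _ < b * (a/b) + b := by omega
      _ = (a/b + 1) * b := by ring
  have h2 : (a:ℝ) < (((a/b : ℕ):ℝ) + 1) * b := by exact_mod_cast h1
  rw [sub_lt_iff_lt_add, div_lt_iff₀ hbR]
  linarith [h2]

lemma natdiv_le (a b : ℕ) (hb : 0 < b) : ((a/b : ℕ):ℝ) ≤ (a:ℝ)/b := by
  have hbR : (0:ℝ) < b := by exact_mod_cast hb
  rw [le_div_iff₀ hbR]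
  have h1 : (a/b) * b ≤ a := Nat.div_mul_le_self a b
  exact_mod_cast h1



-- chunk J : numeric core

lemma numeric_core (ε : ℝ) (hε0 : 0 < ε) (hε : ε < 1/2) (k DD T N : ℕ) (hk2 : 2 ≤ k)
    (hDD : DD = ⌈(8:ℝ)/ε⌉₊) (hT : T = ⌈(16:ℝ)/49 * (k:ℝ)^2 * (ε⁻¹)^4⌉₊ + 1)
    (hN : N = ⌊(k:ℝ)^2 * (ε⁻¹)^5⌋₊) :
    ε^N * (8 * (DD:ℝ)^T) ≤ 1 := by
  have hεipos : (0:ℝ) < ε⁻¹ := by positivity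
  have hεi2 : (2:ℝ) < ε⁻¹ := by
    rw [← one_div, lt_div_iff₀ hε0]
    linarith
  have hNlb : (k:ℝ)^2 * (ε⁻¹)^5 - 1 < (N:ℝ) := by
    rw [hN]
    have := Nat.lt_floor_add_one ((k:ℝ)^2 * (ε⁻¹)^5)
    linarith
  have hTub : (T:ℝ) ≤ (16:ℝ)/49 * (k:ℝ)^2 * (ε⁻¹)^4 + 2 := by
    rw [hT]
    push_cast
    have := Nat.ceil_lt_add_one (show (0:ℝ) ≤ 16/49*(k:ℝ)^2*(ε⁻¹)^4 by positivity)
    linarith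
  have hk2R : (2:ℝ) ≤ (k:ℝ) := by exact_mod_cast hk2
  have hx : (64:ℝ) ≤ (k:ℝ)^2 * (ε⁻¹)^4 := by
    have h1 : (4:ℝ) ≤ (k:ℝ)^2 := by nlinarith
    have h2a : (4:ℝ) ≤ (ε⁻¹)^2 := by nlinarith [hεi2]
    have h2 : (16:ℝ) ≤ (ε⁻¹)^4 := by nlinarith [h2a]
    nlinarith [h1, h2]
  have h5N : 21 * (T:ℝ) + 15 ≤ 5 * (N:ℝ) := by
    have h3 : 2*((k:ℝ)^2*(ε⁻¹)^4) ≤ (k:ℝ)^2*(ε⁻¹)^5 := by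
      have h4 : (ε⁻¹)^5 = (ε⁻¹)^4 * ε⁻¹ := by ring
      have h5 : 2 * (ε⁻¹)^4 ≤ (ε⁻¹)^4 * ε⁻¹ := by nlinarith [pow_pos hεipos 4]
      have h6 : (0:ℝ) ≤ (k:ℝ)^2 := sq_nonneg _
      nlinarith
    linarith [hTub, hNlb, h3, hx]
  have h5N' : 21 * T + 15 ≤ 5 * N := by exact_mod_cast h5N
  have hTN : T ≤ N := by omega
  have h2N : 8 * 9^T * 2^T ≤ 2^N := by
    have e1 : (8 * 9^T * 2^T)^5 = 8^5 * ((9^5)^T) * ((2^5)^T) := by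
      rw [mul_pow, mul_pow, pow_right_comm 9 T 5, pow_right_comm 2 T 5]
    have e2 : (2^N)^5 = (2^5)^N := pow_right_comm 2 N 5
    have h5pow : (8 * 9^T * 2^T)^5 ≤ (2^N)^5 := by
      rw [e1, e2]
      calc 8^5 * (9^5)^T * (2^5)^T
          ≤ 2^15 * (2^16)^T * (2^5)^T := by
            have h95 : (9:ℕ)^5 ≤ 2^16 := by norm_num
            have h85 : (8:ℕ)^5 ≤ 2^15 := by norm_num
            exact Nat.mul_le_mul (Nat.mul_le_mul h85 (Nat.pow_le_pow_left h95 T)) (le_refl _)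
        _ = 2^(15 + 16*T + 5*T) := by
            rw [← pow_mul, ← pow_mul, ← pow_add, ← pow_add]
        _ ≤ 2^(5*N) := Nat.pow_le_pow_right (by norm_num) (by omega)
        _ = (2^5)^N := by rw [← pow_mul]
    exact (Nat.pow_le_pow_iff_left (by norm_num : (5:ℕ) ≠ 0)).mp h5pow
  have h8 : 8 * 9^T ≤ 2^(N-T) := by
    have h9 : (8 * 9^T) * 2^T ≤ 2^(N-T) * 2^T := by
      rw [← pow_add]
      rw [show N - T + T = N from by omega]
      exact h2N
    exact Nat.le_of_mul_le_mul_right h9 (by positivity)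
  have hDD9 : (DD:ℝ) ≤ 9 * ε⁻¹ := by
    rw [hDD]
    have h1 : (⌈(8:ℝ)/ε⌉₊ : ℝ) < 8/ε + 1 := Nat.ceil_lt_add_one (by positivity)
    have h2 : (1:ℝ) ≤ 1/ε := by
      rw [le_div_iff₀ hε0]; linarith
    have h3 : (8:ℝ)/ε + 1 ≤ 9 * ε⁻¹ := by
      have h4 : (8:ℝ)/ε = 8 * ε⁻¹ := by rw [div_eq_mul_inv]
      have h5 : (1:ℝ) ≤ ε⁻¹ := by
        rw [← one_div]; exact h2
      rw [h4]
      linarith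
    linarith
  have hstep : (8:ℝ) * 9^T ≤ (ε⁻¹)^(N-T) := by
    calc (8:ℝ) * 9^T = ((8 * 9^T : ℕ):ℝ) := by push_cast; ring
      _ ≤ ((2^(N-T) : ℕ):ℝ) := by exact_mod_cast h8
      _ = (2:ℝ)^(N-T) := by push_cast; ring
      _ ≤ (ε⁻¹)^(N-T) := pow_le_pow_left₀ (by norm_num) hεi2.le _
  have hεN : (0:ℝ) ≤ ε^N := by positivity
  calc ε^N * (8 * (DD:ℝ)^T)
      ≤ ε^N * (8 * (9*ε⁻¹)^T) := by
        apply mul_le_mul_of_nonneg_left _ hεN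
        apply mul_le_mul_of_nonneg_left _ (by norm_num : (0:ℝ) ≤ 8)
        exact pow_le_pow_left₀ (by positivity) hDD9 T
    _ = ε^N * ((8 * 9^T) * (ε⁻¹)^T) := by rw [mul_pow]; ring
    _ ≤ ε^N * ((ε⁻¹)^(N-T) * (ε⁻¹)^T) := by
        apply mul_le_mul_of_nonneg_left _ hεN
        exact mul_le_mul_of_nonneg_right hstep (by positivity)
    _ = ε^N * (ε⁻¹)^N := by
        rw [← pow_add, show N - T + T = N from by omega]
    _ = 1 := by
        rw [← mul_pow, mul_inv_cancel₀ (ne_of_gt hε0), one_pow]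

end Weak


open Weak

/-- Lemma 5 (weak regularity, Duke–Lefmann–Rödl / Conlon–Fox): for `0 < ε < 1/2`,
any graph on at least `k` vertices has an `ε`-regular `k`-cylinder with parts of
equal size, each part of size at least `(1/(2k)) ε^(k² ε⁻⁵) |V|`. -/
theorem weak_regular_cylinder (ε : ℝ) (hε0 : 0 < ε) (hε : ε < 1 / 2)
    (k : ℕ) (hk : 0 < k)
    (V : Type) [Fintype V] [DecidableEq V] (hV : k ≤ Fintype.card V)
    (G : SimpleGraph V) :
    ∃ P : Fin k → Finset V,
      (∀ i j, i ≠ j → Disjoint (P i) (P j)) ∧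
      (∀ i j, (P i).card = (P j).card) ∧
      (∀ i j, i < j → EpsRegular G ε (P i) (P j)) ∧
      ∀ i, (1 / (2 * (k : ℝ))) * ε ^ (((k : ℝ) ^ 2) * ε ^ (-5 : ℝ)) * (Fintype.card V : ℝ)
        ≤ ((P i).card : ℝ) := by
  classical
  set n := Fintype.card V with hn
  have hnpos : 0 < n := lt_of_lt_of_le hk hV
  have hε1 : ε ≤ 1 := by linarith
  have hEnonneg : (0:ℝ) ≤ ((k : ℝ) ^ 2) * ε ^ (-5 : ℝ) := by positivity
  rcases Nat.lt_or_ge k 2 with hk1 | hk2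
  · -- k = 1
    have hk1' : k = 1 := by omega
    subst hk1'
    refine ⟨fun _ => Finset.univ, ?_, ?_, ?_, ?_⟩
    · intro i j hij
      exact absurd (Subsingleton.elim i j) hij
    · intro i j; rfl
    · intro i j hij
      have h1 : (i:ℕ) < (j:ℕ) := hij
      have h2 := i.isLt
      have h3 := j.isLt
      omega
    · intro i
      have h1 : ε ^ (((1:ℕ):ℝ)^2 * ε ^ (-5 : ℝ)) ≤ 1 :=
        Real.rpow_le_one hε0.le hε1 (by positivity)
      have h2 : (Finset.univ : Finset V).card = n := by rw [Finset.card_univ]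
      rw [h2]
      have h3 : (0:ℝ) ≤ (n:ℝ) := by positivity
      calc (1 / (2 * ((1:ℕ) : ℝ))) * ε ^ ((((1:ℕ) : ℝ) ^ 2) * ε ^ (-5 : ℝ)) * (n:ℝ)
          ≤ (1 / (2 * ((1:ℕ) : ℝ))) * 1 * (n:ℝ) := by
            apply mul_le_mul_of_nonneg_right _ h3
            apply mul_le_mul_of_nonneg_left h1 (by norm_num)
        _ ≤ (n:ℝ) := by linarith [h3]
  · -- k ≥ 2
    set E := ((k : ℝ) ^ 2) * ε ^ (-5 : ℝ) with hE
    have hEeq : E = (k:ℝ)^2 * (ε⁻¹)^5 := by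
      rw [hE]
      congr 1
      rw [show ((-5:ℝ)) = -((5:ℕ):ℝ) by norm_num, Real.rpow_neg hε0.le, Real.rpow_natCast]
      exact (inv_pow ε 5).symm
    set DD := ⌈(8:ℝ)/ε⌉₊ with hDD
    set T := ⌈(16:ℝ)/49 * (k:ℝ)^2 * (ε⁻¹)^4⌉₊ + 1 with hT
    set N := ⌊(k:ℝ)^2 * (ε⁻¹)^5⌋₊ with hN
    have hkey := numeric_core ε hε0 hε k DD T N hk2 hDD hT hN
    have hDDpos : 0 < DD := by
      rw [hDD]
      exact Nat.ceil_pos.mpr (by positivity)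
    have hDDTpos : (0:ℝ) < (DD:ℝ)^T := by
      have : (0:ℝ) < (DD:ℝ) := by exact_mod_cast hDDpos
      positivity
    have hεE : ε ^ E ≤ ε ^ N := by
      have h1 : (N:ℝ) ≤ E := by
        rw [hEeq, hN]
        exact Nat.floor_le (by positivity)
      have h2 := Real.rpow_le_rpow_of_exponent_ge hε0 hε1 h1
      rwa [Real.rpow_natCast] at h2
    have hεNle : ε^N ≤ 1/(8*(DD:ℝ)^T) := by
      rw [le_div_iff₀ (by positivity)]
      linarith [hkey]
    have hεD : (8:ℝ) ≤ ε * DD := by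
      have h1 : (8:ℝ)/ε ≤ (DD:ℝ) := by rw [hDD]; exact Nat.le_ceil _
      rw [div_le_iff₀ hε0] at h1
      linarith
    have hεEpos : (0:ℝ) ≤ ε ^ E := by positivity
    by_cases hτ : (1/(2*(k:ℝ))) * ε^E * (n:ℝ) ≤ 1
    · -- singleton cylinder
      obtain ⟨U, hUsub, hUcard⟩ := Finset.exists_subset_card_eq
        (show k ≤ (Finset.univ : Finset V).card by rw [Finset.card_univ]; exact hV)
      set f : Fin k → V := fun i => ((U.equivFin.symm (Fin.cast hUcard.symm i)) : U).1 with hf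
      have hfinj : Function.Injective f := by
        intro i j hij
        have h1 : U.equivFin.symm (Fin.cast hUcard.symm i)
            = U.equivFin.symm (Fin.cast hUcard.symm j) := Subtype.ext hij
        have h2 := U.equivFin.symm.injective h1
        have h3 := congrArg Fin.val h2
        exact Fin.ext (by simpa using h3)
      refine ⟨fun i => {f i}, ?_, ?_, ?_, ?_⟩
      · intro i j hij
        simp only [Finset.disjoint_singleton_left, Finset.mem_singleton]
        exact fun h => hij (hfinj h)
      · intro i j; simp
      · intro i j _
        exact eps_regular_singleton G ε hε0 _ _
      · intro i
        simp only [Finset.card_singleton, Nat.cast_one]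
        exact hτ
    · push_neg at hτ
      set m := n / k with hm
      set q := m / DD^T with hq
      have hkpos : (0:ℝ) < (k:ℝ) := by exact_mod_cast hk
      have hnposR : (0:ℝ) < (n:ℝ) := by exact_mod_cast hnpos
      have hbnd : (1/(2*(k:ℝ))) * ε^E * (n:ℝ) ≤ (n:ℝ) / (16*(k:ℝ)*(DD:ℝ)^T) := by
        calc (1/(2*(k:ℝ))) * ε^E * (n:ℝ)
            ≤ (1/(2*(k:ℝ))) * (1/(8*(DD:ℝ)^T)) * (n:ℝ) := by
              apply mul_le_mul_of_nonneg_right _ hnposR.le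
              apply mul_le_mul_of_nonneg_left _ (by positivity)
              linarith [hεE, hεNle]
          _ = (n:ℝ) / (16*(k:ℝ)*(DD:ℝ)^T) := by
              ring
      have hn16 : 16*(k:ℝ)*(DD:ℝ)^T < (n:ℝ) := by
        have h1 := lt_of_lt_of_le hτ hbnd
        rw [lt_div_iff₀ (by positivity)] at h1
        linarith
      set R : ℝ := (n:ℝ) / ((k:ℝ) * (DD:ℝ)^T) with hR
      have hR16 : 16 < R := by
        rw [hR, lt_div_iff₀ (by positivity)]
        nlinarith [hn16]
      have hDT1 : (1:ℝ) ≤ (DD:ℝ)^T := by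
        have h1 : (1:ℝ) ≤ (DD:ℝ) := by exact_mod_cast hDDpos
        exact one_le_pow₀ h1
      have hmlb : (n:ℝ)/(k:ℝ) - 1 < (m:ℝ) := by
        have := natdiv_gt n k hk
        rw [hm]
        exact_mod_cast this
      have hqlb : (m:ℝ)/((DD:ℝ)^T) - 1 < (q:ℝ) := by
        have h1 := natdiv_gt m (DD^T) (by positivity)
        rw [hq]
        have h2 : ((DD^T : ℕ):ℝ) = (DD:ℝ)^T := by push_cast; ring
        rw [h2] at h1
        exact h1
      have hRq : R - 2 < (q:ℝ) := by
        have h1 : ((n:ℝ)/(k:ℝ) - 1)/((DD:ℝ)^T) < (m:ℝ)/((DD:ℝ)^T) := by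
          gcongr
        have h2 : 1/((DD:ℝ)^T) ≤ 1 := by
          rw [div_le_one hDDTpos]
          exact hDT1
        have heq : ((n:ℝ)/(k:ℝ) - 1)/((DD:ℝ)^T) = R - 1/((DD:ℝ)^T) := by
          rw [hR]
          ring
        linarith [hqlb, h1, h2, heq]
      have hq14 : (14:ℝ) < (q:ℝ) := by linarith [hR16, hRq]
      have hq1 : 0 < q := by
        have h1 : (0:ℝ) < (q:ℝ) := by linarith
        exact_mod_cast h1
      have hs0n : k * (q * DD^T) ≤ n := by
        have h1 : q * DD^T ≤ m := Nat.div_mul_le_self m (DD^T)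
        have h2 : k * m ≤ n := by
          rw [hm, Nat.mul_comm]
          exact Nat.div_mul_le_self n k
        calc k * (q*DD^T) ≤ k * m := Nat.mul_le_mul_left k h1
          _ ≤ n := h2
      obtain ⟨UW, hUWsub, hUWcard⟩ := Finset.exists_subset_card_eq
        (show k*(q*DD^T) ≤ (Finset.univ : Finset V).card by
          rw [Finset.card_univ]; exact hs0n)
      obtain ⟨PW, hPWcard, hPWmem, hPWdisj, hPWun⟩ :=
        exists_blocks (q*DD^T) (Nat.mul_pos hq1 (pow_pos hDDpos T)) k UW hUWcard
      set W : Fin k → Finset V :=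
        fun i => ((PW.equivFin.symm (Fin.cast hPWcard.symm i)) : PW).1 with hW
      have hWmem : ∀ i, W i ∈ PW :=
        fun i => ((PW.equivFin.symm (Fin.cast hPWcard.symm i))).2
      have hWcard : ∀ i, (W i).card = q * DD^T := fun i => (hPWmem _ (hWmem i)).2
      have hWne : ∀ i j, i ≠ j → W i ≠ W j := by
        intro i j hij hWeq
        apply hij
        have h1 : PW.equivFin.symm (Fin.cast hPWcard.symm i)
            = PW.equivFin.symm (Fin.cast hPWcard.symm j) := Subtype.ext hWeq
        have h2 := PW.equivFin.symm.injective h1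
        have h3 := congrArg Fin.val h2
        exact Fin.ext (by simpa using h3)
      have hTlb : (k:ℝ)^2/4 < (T:ℝ) * ((49:ℝ)/64 * ε^4) := by
        have h1 : (16:ℝ)/49*(k:ℝ)^2*(ε⁻¹)^4 ≤ (⌈(16:ℝ)/49 * (k:ℝ)^2 * (ε⁻¹)^4⌉₊ : ℝ) :=
          Nat.le_ceil _
        have h2 : ((⌈(16:ℝ)/49 * (k:ℝ)^2 * (ε⁻¹)^4⌉₊ : ℕ) : ℝ) + 1 = (T:ℝ) := by
          rw [hT]; push_cast; ring
        have hei4 : (ε⁻¹)^4 * ε^4 = 1 := by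
          rw [← mul_pow, inv_mul_cancel₀ (ne_of_gt hε0), one_pow]
        have h4 : ((16:ℝ)/49*(k:ℝ)^2*(ε⁻¹)^4) * ((49:ℝ)/64 * ε^4) = (k:ℝ)^2/4 := by
          calc ((16:ℝ)/49*(k:ℝ)^2*(ε⁻¹)^4) * ((49:ℝ)/64 * ε^4)
              = (k:ℝ)^2*((ε⁻¹)^4*ε^4)/4 := by ring
            _ = (k:ℝ)^2/4 := by rw [hei4]; ring
        have h5 : (0:ℝ) < (49:ℝ)/64*ε^4 := by positivity
        have h6 : ((16:ℝ)/49*(k:ℝ)^2*(ε⁻¹)^4 + 1) * ((49:ℝ)/64*ε^4)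
            ≤ (T:ℝ) * ((49:ℝ)/64*ε^4) := by
          apply mul_le_mul_of_nonneg_right _ h5.le
          linarith [h1, h2]
        nlinarith [h4, h5, h6]
      obtain ⟨P, hPsub, ⟨c, hPc, hqc⟩, hPreg⟩ :=
        iterate_lemma G ε hε0 k DD T q hq1 hεD W hWcard hTlb
      refine ⟨P, ?_, ?_, ?_, ?_⟩
      · intro i j hij
        have hd := hPWdisj (Finset.mem_coe.mpr (hWmem i)) (Finset.mem_coe.mpr (hWmem j))
          (hWne i j hij)
        exact Finset.disjoint_of_subset_left (hPsub i)
          (Finset.disjoint_of_subset_right (hPsub j) hd)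
      · intro i j; rw [hPc i, hPc j]
      · intro i j hij
        exact hPreg (i, j) (Finset.mem_filter.mpr ⟨Finset.mem_univ _, hij⟩)
      · intro i
        rw [hPc i]
        have h1 : (q:ℝ) ≤ (c:ℝ) := by exact_mod_cast hqc
        have h2 : (n:ℝ)/(16*(k:ℝ)*(DD:ℝ)^T) = R/16 := by
          rw [hR]
          ring
        have h3 : R/16 ≤ R - 2 := by linarith [hR16]
        calc (1/(2*(k:ℝ))) * ε^E * (n:ℝ) ≤ (n:ℝ)/(16*(k:ℝ)*(DD:ℝ)^T) := hbnd
          _ = R/16 := h2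
          _ ≤ R - 2 := h3
          _ ≤ (q:ℝ) := by linarith [hRq]
          _ ≤ (c:ℝ) := h1
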